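/- For fixed j ≥ 1 and each integer s ≥ 0, the s-th moment E(Y_{n,j}^s) of the out-degree of node j in a random ordered increasing k-tree of size n satisfies E(Y_{n,j}^s) / n^{ks/(k+1)} → s!·Γ(j + 1/(k+1)) / Γ(j + 1 + k(s-1)/(k+1)) as n → ∞. -/

import Mathlib

open Filter

open Finset

/-- Generalized binomial coefficient `binom(x, n) = x(x-1)⋯(x-n+1)/n!`. -/
noncomputable def gbinom (x : ℝ) (n : ℕ) : ℝ :=
  (∏ i ∈ Finset.range n, (x - i)) / (Nat.factorial n)

namespace KT

lemma cast_mul_choose (ℓ t : ℕ) :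
    (ℓ : ℝ) * (ℓ.choose t : ℝ)
      = ((t : ℝ) + 1) * (ℓ.choose (t+1) : ℝ) + (t : ℝ) * (ℓ.choose t : ℝ) := by
  rcases le_or_gt t ℓ with h | h
  · have h1 : ((ℓ.choose (t+1) : ℝ)) * ((t:ℝ)+1) = (ℓ.choose t : ℝ) * ((ℓ:ℝ) - t) := by
      have := Nat.choose_succ_right_eq ℓ t
      have h2 : ((ℓ.choose (t+1) * (t+1) : ℕ) : ℝ) = ((ℓ.choose t * (ℓ - t) : ℕ) : ℝ) := by
        exact_mod_cast congrArg (Nat.cast (R := ℝ)) this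
      push_cast [Nat.cast_sub h] at h2
      linarith [h2]
    linear_combination -h1
  · rw [Nat.choose_eq_zero_of_lt h, Nat.choose_eq_zero_of_lt (h.trans (Nat.lt_succ_self t))]
    simp

lemma cast_sub_mul_choose (m ℓ : ℕ) (hm : 1 ≤ m) :
    ((m : ℝ) - ℓ) * (m.choose ℓ : ℝ) = (m : ℝ) * ((m-1).choose ℓ : ℝ) := by
  rcases le_or_gt ℓ m with h | h
  · obtain ⟨m', rfl⟩ : ∃ m', m = m' + 1 := ⟨m - 1, by omega⟩
    have h1 : ((m':ℝ)+1) * (m'.choose ℓ : ℝ) = ((m'+1).choose (ℓ+1) : ℝ) * ((ℓ:ℝ)+1) := by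
      exact_mod_cast congrArg (Nat.cast (R := ℝ)) (Nat.add_one_mul_choose_eq m' ℓ)
    have h2 : ((m'+1).choose (ℓ+1) : ℝ) * ((ℓ:ℝ)+1)
        = ((m'+1).choose ℓ : ℝ) * (((m':ℝ)+1) - ℓ) := by
      have := Nat.choose_succ_right_eq (m'+1) ℓ
      have h3 : (((m'+1).choose (ℓ+1) * (ℓ+1) : ℕ) : ℝ)
          = (((m'+1).choose ℓ * (m'+1-ℓ) : ℕ) : ℝ) := by
        exact_mod_cast congrArg (Nat.cast (R := ℝ)) this
      push_cast [Nat.cast_sub h] at h3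
      linarith [h3]
    simp only [Nat.add_sub_cancel]
    push_cast
    linear_combination -h1 - h2
  · rw [Nat.choose_eq_zero_of_lt h, Nat.choose_eq_zero_of_lt (by omega : m - 1 < ℓ)]
    simp

lemma exists_desc_expansion (v : ℝ) (w : ℕ → ℝ) (N : ℕ) :
    ∃ e : ℕ → ℝ, (∀ t, N < t → e t = 0) ∧
      ∀ ℓ : ℕ, (∏ i ∈ range N, (w i - v * ℓ)) = ∑ t ∈ range (N+1), e t * (ℓ.choose t : ℝ) := by
  induction N with
  | zero =>
      refine ⟨fun t => if t = 0 then 1 else 0, ?_, ?_⟩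
      · intro t ht; simp only [if_neg (by omega : ¬ t = 0)]
      · intro ℓ; simp
  | succ N ih =>
      obtain ⟨e, he0, he⟩ := ih
      refine ⟨fun t => (w N - v * t) * e t - v * t * e (t-1), ?_, ?_⟩
      · intro t ht
        have h1 : e t = 0 := he0 t (by omega)
        have h2 : e (t-1) = 0 := he0 (t-1) (by omega)
        simp [h1, h2]
      · intro ℓ
        rw [prod_range_succ, he ℓ, Finset.sum_mul]
        have key : ∀ t ∈ range (N+1),
            e t * (ℓ.choose t : ℝ) * (w N - v * ℓ)
              = (w N - v * t) * e t * (ℓ.choose t : ℝ)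
                - v * ((t:ℝ)+1) * e t * (ℓ.choose (t+1) : ℝ) := by
          intro t _
          have h := cast_mul_choose ℓ t
          linear_combination (-(v) * e t) * h
        rw [Finset.sum_congr rfl key, Finset.sum_sub_distrib]
        have shift : ∑ t ∈ range (N+2), v * (t:ℝ) * e (t-1) * (ℓ.choose t : ℝ)
            = ∑ t ∈ range (N+1), v * ((t:ℝ)+1) * e t * (ℓ.choose (t+1) : ℝ) := by
          rw [Finset.sum_range_succ' (fun t => v * (t:ℝ) * e (t-1) * (ℓ.choose t : ℝ)) (N+1)]
          simp [Nat.add_sub_cancel]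
        rw [← shift]
        have ext1 : ∑ t ∈ range (N+1), (w N - v * t) * e t * (ℓ.choose t : ℝ)
            = ∑ t ∈ range (N+2), (w N - v * t) * e t * (ℓ.choose t : ℝ) := by
          rw [Finset.sum_range_succ (fun t => (w N - v * (t:ℝ)) * e t * (ℓ.choose t : ℝ)) (N+1)]
          simp [he0 (N+1) (by omega)]
        rw [ext1, ← Finset.sum_sub_distrib]
        refine Finset.sum_congr rfl fun t _ => ?_
        ring

lemma alt_sum_choose_mul_choose (m t : ℕ) (h : t < m) :
    ∑ ℓ ∈ range (m+1), (m.choose ℓ : ℝ) * (-1)^ℓ * (ℓ.choose t : ℝ) = 0 := by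
  have hsplit : range (m+1) = Finset.Ico 0 t ∪ Finset.Ico t (m+1) := by
    rw [Finset.range_eq_Ico, ← Finset.Ico_union_Ico_eq_Ico (Nat.zero_le t) (by omega)]
  rw [hsplit, Finset.sum_union (by
    simp only [Finset.disjoint_left, Finset.mem_Ico, Finset.mem_range]
    intro a ha hb
    omega)]
  have h1 : ∑ ℓ ∈ Finset.Ico 0 t, (m.choose ℓ : ℝ) * (-1)^ℓ * (ℓ.choose t : ℝ) = 0 := by
    refine Finset.sum_eq_zero fun ℓ hℓ => ?_
    rw [Finset.mem_Ico] at hℓ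
    rw [Nat.choose_eq_zero_of_lt hℓ.2]
    simp
  rw [h1, zero_add, Finset.sum_Ico_eq_sum_range]
  have h2 : ∀ i ∈ range (m + 1 - t),
      (m.choose (t+i) : ℝ) * (-1)^(t+i) * ((t+i).choose t : ℝ)
        = ((m.choose t : ℝ) * (-1)^t) * ((-1)^i * ((m-t).choose i : ℝ)) := by
    intro i hi
    rw [Finset.mem_range] at hi
    have hc : m.choose (t+i) * (t+i).choose t = m.choose t * (m-t).choose i := by
      have := Nat.choose_mul (n := m) (show t ≤ t + i by omega)
      simpa using this
    have hc' : ((m.choose (t+i) : ℝ)) * ((t+i).choose t : ℝ)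
        = (m.choose t : ℝ) * ((m-t).choose i : ℝ) := by exact_mod_cast hc
    rw [pow_add]
    linear_combination ((-1:ℝ)^t * (-1)^i) * hc'
  rw [Finset.sum_congr rfl h2, ← Finset.mul_sum]
  have h3 : ∑ i ∈ range (m + 1 - t), (-1:ℝ)^i * ((m-t).choose i : ℝ) = 0 := by
    have hmt : m + 1 - t = (m - t) + 1 := by omega
    rw [hmt]
    have := Int.alternating_sum_range_choose_of_ne (show m - t ≠ 0 by omega)
    exact_mod_cast congrArg (Int.cast (R := ℝ)) this
  rw [h3, mul_zero]

end KT

/-- `P{Y_{n,j} = m}`: the exact distribution of the out-degree of node `j` in a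
random ordered increasing `k`-tree of size `n`. -/
noncomputable def Pdeg (k n j m : ℕ) : ℝ :=
  gbinom ((j : ℝ) - k / (k + 1)) j
    / (gbinom ((n : ℝ) - k / (k + 1)) n * (Nat.choose n j : ℝ))
    * ∑ ℓ ∈ Finset.range (m + 1),
        (Nat.choose m ℓ : ℝ) * (-1) ^ ℓ * gbinom ((n : ℝ) - (k : ℝ) * (2 + ℓ) / (k + 1)) (n - j)

namespace KT2
open KT

noncomputable def Q (k n j m : ℕ) : ℝ :=
  ∑ ℓ ∈ Finset.range (m + 1),
    (Nat.choose m ℓ : ℝ) * (-1) ^ ℓ * gbinom ((n : ℝ) - (k : ℝ) * (2 + ℓ) / (k + 1)) (n - j)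

noncomputable def pref (k n j : ℕ) : ℝ :=
  gbinom ((j : ℝ) - k / (k + 1)) j
    / (gbinom ((n : ℝ) - k / (k + 1)) n * (Nat.choose n j : ℝ))

lemma Pdeg_eq (k n j m : ℕ) : Pdeg k n j m = pref k n j * Q k n j m := rfl

lemma Q_eq_zero (k n j m : ℕ) (h : n - j < m) : Q k n j m = 0 := by
  have hK : ((k:ℝ)+1) ≠ 0 := by positivity
  obtain ⟨e, he0, he⟩ := exists_desc_expansion ((k:ℝ)/((k:ℝ)+1))
    (fun i => (n:ℝ) - 2*(k:ℝ)/((k:ℝ)+1) - i) (n - j)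
  have key : ∀ ℓ : ℕ, gbinom ((n : ℝ) - (k : ℝ) * (2 + ℓ) / (k + 1)) (n - j)
      = (∑ t ∈ Finset.range ((n-j)+1), e t * (ℓ.choose t : ℝ)) / ((n-j).factorial : ℝ) := by
    intro ℓ
    rw [← he ℓ]
    unfold gbinom
    congr 1
    refine Finset.prod_congr rfl fun i _ => ?_
    field_simp
    ring
  unfold Q
  calc ∑ ℓ ∈ Finset.range (m + 1),
      (Nat.choose m ℓ : ℝ) * (-1) ^ ℓ * gbinom ((n : ℝ) - (k : ℝ) * (2 + ℓ) / (k + 1)) (n - j)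
      = ∑ ℓ ∈ Finset.range (m+1), ∑ t ∈ Finset.range ((n-j)+1),
          (e t / ((n-j).factorial : ℝ)) * ((Nat.choose m ℓ : ℝ) * (-1)^ℓ * (ℓ.choose t : ℝ)) := by
        refine Finset.sum_congr rfl fun ℓ _ => ?_
        rw [key ℓ, Finset.sum_div, Finset.mul_sum]
        exact Finset.sum_congr rfl fun t _ => by ring
    _ = ∑ t ∈ Finset.range ((n-j)+1), (e t / ((n-j).factorial : ℝ))
          * ∑ ℓ ∈ Finset.range (m+1), ((Nat.choose m ℓ : ℝ) * (-1)^ℓ * (ℓ.choose t : ℝ)) := by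
        rw [Finset.sum_comm]
        exact Finset.sum_congr rfl fun t _ => by rw [Finset.mul_sum]
    _ = 0 := Finset.sum_eq_zero fun t ht => by
        rw [alt_sum_choose_mul_choose m t
          (by rw [Finset.mem_range] at ht; omega), mul_zero]

lemma gbinom_succ (x : ℝ) (N : ℕ) : gbinom x (N+1) = x * gbinom (x-1) N / ((N:ℝ)+1) := by
  unfold gbinom
  rw [Finset.prod_range_succ' (fun i => x - (i:ℕ)) N]
  have h1 : ∀ i ∈ Finset.range N, x - ((i+1 : ℕ):ℝ) = (x - 1) - (i:ℝ) := by
    intro i _; push_cast; ring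
  rw [Finset.prod_congr rfl h1, Nat.factorial_succ]
  have h2 : ((N:ℝ)) + 1 ≠ 0 := by positivity
  have h3 : ((N.factorial : ℝ)) ≠ 0 := Nat.cast_ne_zero.mpr N.factorial_ne_zero
  push_cast
  field_simp
  ring

lemma Q_rec (k n j m : ℕ) (hnj : j + 1 ≤ n) :
    ((k:ℝ)+1) * ((n:ℝ) - (j:ℝ)) * Q k n j m
      = (((k:ℝ)+1)*(n:ℝ) - 2*(k:ℝ) - (k:ℝ)*(m:ℝ)) * Q k (n-1) j m
        + (k:ℝ) * (m:ℝ) * Q k (n-1) j (m-1) := by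
  have hK : ((k:ℝ)+1) ≠ 0 := by positivity
  have hnj' : (n:ℝ) - (j:ℝ) ≠ 0 := by
    have : (j:ℝ) + 1 ≤ (n:ℝ) := by exact_mod_cast hnj
    linarith
  have hsub : n - j = ((n-1) - j) + 1 := by omega
  have hcast : (((n-1) - j : ℕ) : ℝ) + 1 = (n:ℝ) - (j:ℝ) := by
    have h1 : (((n-1) - j : ℕ) : ℝ) = (n:ℝ) - 1 - (j:ℝ) := by
      have : ((n:ℕ) - 1 - j) + (j + 1) = n := by omega
      have := congrArg (Nat.cast (R := ℝ)) this
      push_cast at this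
      linarith
    rw [h1]; ring
  have hn1 : ((n-1 : ℕ):ℝ) = (n:ℝ) - 1 := by
    have : (n - 1) + 1 = n := by omega
    have := congrArg (Nat.cast (R := ℝ)) this
    push_cast at this
    linarith
  -- step identity for the gbinom factors
  have hstep : ∀ ℓ : ℕ,
      ((n:ℝ) - (j:ℝ)) * gbinom ((n : ℝ) - (k : ℝ) * (2 + ℓ) / (k + 1)) (n - j)
        = ((n:ℝ) - (k : ℝ) * (2 + ℓ) / (k + 1))
            * gbinom (((n-1 : ℕ)) - (k : ℝ) * (2 + ℓ) / (k + 1)) ((n-1) - j) := by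
    intro ℓ
    rw [hsub, gbinom_succ, hcast]
    rw [mul_div_assoc', mul_comm ((n:ℝ) - (j:ℝ)), mul_div_assoc, div_self hnj', mul_one]
    congr 2
    rw [hn1]; ring
  have expand : ((k:ℝ)+1) * ((n:ℝ) - (j:ℝ)) * Q k n j m
      = ∑ ℓ ∈ Finset.range (m+1), (Nat.choose m ℓ : ℝ) * (-1)^ℓ
          * ((((k:ℝ)+1)*(n:ℝ) - 2*(k:ℝ) - (k:ℝ)*(ℓ:ℝ))
              * gbinom (((n-1 : ℕ)) - (k : ℝ) * (2 + ℓ) / (k + 1)) ((n-1) - j)) := by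
    unfold Q
    rw [Finset.mul_sum]
    refine Finset.sum_congr rfl fun ℓ _ => ?_
    have h := hstep ℓ
    have hco : ((k:ℝ)+1) * ((n:ℝ) - (k : ℝ) * (2 + ℓ) / (k + 1))
        = ((k:ℝ)+1)*(n:ℝ) - 2*(k:ℝ) - (k:ℝ)*(ℓ:ℝ) := by
      field_simp
      ring
    calc ((k:ℝ)+1) * ((n:ℝ) - (j:ℝ))
          * ((Nat.choose m ℓ : ℝ) * (-1)^ℓ * gbinom ((n : ℝ) - (k : ℝ) * (2 + ℓ) / (k + 1)) (n - j))
        = ((k:ℝ)+1) * ((Nat.choose m ℓ : ℝ) * (-1)^ℓ)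
          * (((n:ℝ) - (j:ℝ)) * gbinom ((n : ℝ) - (k : ℝ) * (2 + ℓ) / (k + 1)) (n - j)) := by ring
      _ = ((k:ℝ)+1) * ((Nat.choose m ℓ : ℝ) * (-1)^ℓ)
          * (((n:ℝ) - (k : ℝ) * (2 + ℓ) / (k + 1))
            * gbinom (((n-1 : ℕ)) - (k : ℝ) * (2 + ℓ) / (k + 1)) ((n-1) - j)) := by rw [h]
      _ = _ := by rw [← hco]; ring
  rw [expand]
  rcases Nat.eq_zero_or_pos m with hm | hm
  · subst hm
    simp [Q]
  · have hm1 : (m - 1) + 1 = m := by omega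
    have hQ2 : Q k (n-1) j (m-1) = ∑ ℓ ∈ Finset.range (m+1),
        ((m-1).choose ℓ : ℝ) * (-1)^ℓ
          * gbinom (((n-1 : ℕ)) - (k : ℝ) * (2 + ℓ) / (k + 1)) ((n-1) - j) := by
      unfold Q
      rw [hm1, Finset.sum_range_succ, Nat.choose_eq_zero_of_lt (by omega : m - 1 < m)]
      simp
    rw [hQ2]
    unfold Q
    rw [Finset.mul_sum, Finset.mul_sum, ← Finset.sum_add_distrib]
    refine Finset.sum_congr rfl fun ℓ _ => ?_
    have h := cast_sub_mul_choose m ℓ hm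
    set g := gbinom (((n-1 : ℕ)) - (k : ℝ) * (2 + ℓ) / (k + 1)) ((n-1) - j) with hg
    linear_combination ((k:ℝ) * (-1)^ℓ * g) * h

end KT2

namespace KT3
open KT KT2

/-- `fS s m = (m+1)(m+2)⋯(m+s)` -/
noncomputable def fS (s m : ℕ) : ℝ := ∏ i ∈ Finset.range s, ((m:ℝ) + i + 1)

lemma fS_zero_left (m : ℕ) : fS 0 m = 1 := by simp [fS]

lemma fS_succ (s m : ℕ) : fS (s+1) m = fS s m * ((m:ℝ) + s + 1) :=
  Finset.prod_range_succ _ _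

lemma fS_at_zero (s : ℕ) : fS s 0 = (s.factorial : ℝ) := by
  rw [← Finset.prod_range_add_one_eq_factorial s]
  push_cast [fS]
  exact Finset.prod_congr rfl fun i _ => by ring

lemma fS_shift (s m : ℕ) : ((m:ℝ)+1) * fS s (m+1) = fS s m * ((m:ℝ) + s + 1) := by
  have h1 : fS s (m+1) = ∏ i ∈ Finset.range s, (((m:ℝ) + 1) + (i+1)) := by
    unfold fS
    exact Finset.prod_congr rfl fun i _ => by push_cast; ring
  have h2 : ((m:ℝ)+1) * fS s (m+1) = ∏ i ∈ Finset.range (s+1), (((m:ℝ) + 1) + i) := by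
    rw [Finset.prod_range_succ' (fun i => ((m:ℝ)+1) + i) s, h1]
    push_cast
    ring
  rw [h2, Finset.prod_range_succ]
  unfold fS
  rw [Finset.prod_congr rfl (fun (i : ℕ) (_ : i ∈ Finset.range s) => by push_cast; ring :
    ∀ i ∈ Finset.range s, ((m:ℝ)+1) + (i:ℝ) = (m:ℝ) + i + 1)]
  push_cast
  ring

lemma gbinom_shift_pos (n : ℕ) (c : ℝ) (hc0 : 0 ≤ c) (hc1 : c < 1) :
    0 < gbinom ((n:ℝ) - c) n := by
  unfold gbinom
  apply div_pos
  · apply Finset.prod_pos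
    intro i hi
    rw [Finset.mem_range] at hi
    have : (i:ℝ) ≤ (n:ℝ) - 1 := by
      have : (i:ℝ) + 1 ≤ (n:ℝ) := by exact_mod_cast hi
      linarith
    linarith
  · exact_mod_cast Nat.factorial_pos n

lemma hc_range (k : ℕ) : 0 ≤ (k:ℝ)/((k:ℝ)+1) ∧ (k:ℝ)/((k:ℝ)+1) < 1 := by
  constructor
  · positivity
  · rw [div_lt_one (by positivity)]
    linarith

lemma pref_self (k j : ℕ) : pref k j j = 1 := by
  unfold pref
  rw [Nat.choose_self, Nat.cast_one, mul_one]
  exact div_self (gbinom_shift_pos j ((k:ℝ)/((k:ℝ)+1)) (hc_range k).1 (hc_range k).2).ne'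

lemma pref_rec (k n j : ℕ) (hnj : j + 1 ≤ n) :
    pref k n j * ((n:ℝ) - (k:ℝ)/((k:ℝ)+1)) = pref k (n-1) j * ((n:ℝ) - (j:ℝ)) := by
  obtain ⟨p, rfl⟩ : ∃ p, n = p + 1 := ⟨n - 1, by omega⟩
  have hjp : j ≤ p := by omega
  simp only [Nat.add_sub_cancel]
  unfold pref
  obtain ⟨c, hc0, hc1, hcdef⟩ : ∃ c : ℝ, 0 ≤ c ∧ c < 1 ∧ c = (k:ℝ)/((k:ℝ)+1) :=
    ⟨(k:ℝ)/((k:ℝ)+1), (hc_range k).1, (hc_range k).2, rfl⟩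
  rw [← hcdef]
  have hgb : gbinom (((p+1:ℕ):ℝ) - c) (p+1)
      = (((p+1:ℕ):ℝ) - c) * gbinom ((p:ℝ) - c) p / ((p:ℝ)+1) := by
    rw [gbinom_succ]
    have harg : ((p+1:ℕ):ℝ) - c - 1 = (p:ℝ) - c := by push_cast; ring
    rw [harg]
  have hch : (((p+1).choose j : ℕ):ℝ) * (((p:ℝ) + 1) - (j:ℝ))
      = ((p:ℝ) + 1) * ((p.choose j : ℕ):ℝ) := by
    have h1 : (p+1).choose j * ((p+1) - j) = (p+1) * (p.choose j) := by
      have h2 := Nat.add_one_mul_choose_eq p j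
      have h3 := Nat.choose_succ_right_eq (p+1) j
      exact (h2.trans h3).symm
    have := congrArg (Nat.cast (R := ℝ)) h1
    push_cast [Nat.cast_sub (by omega : j ≤ p + 1)] at this
    linarith [this]
  have hBpos : (0:ℝ) < gbinom ((p:ℝ) - c) p := by
    rw [hcdef] at hc0 hc1 ⊢
    exact gbinom_shift_pos p _ hc0 hc1
  have hC1pos : (0:ℝ) < ((p+1).choose j : ℝ) := by
    exact_mod_cast Nat.choose_pos (by omega : j ≤ p + 1)
  have hC0pos : (0:ℝ) < (p.choose j : ℝ) := by
    exact_mod_cast Nat.choose_pos hjp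
  have hppos : (0:ℝ) < (p:ℝ) + 1 := by positivity
  have hXpos : (0:ℝ) < ((p+1:ℕ):ℝ) - c := by
    have h1 : (1:ℝ) ≤ ((p+1:ℕ):ℝ) := by exact_mod_cast (by omega : 1 ≤ p + 1)
    linarith
  rw [hgb]
  push_cast
  push_cast at hXpos
  field_simp [hXpos.ne', hBpos.ne', hC1pos.ne']
  linear_combination (-(gbinom ((j:ℝ) - c) j)) * hch

end KT3

namespace KT4
open KT KT2 KT3

noncomputable def S (k j s n : ℕ) : ℝ := ∑ m ∈ Finset.range (n+1), fS s m * Q k n j m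
noncomputable def M (k j s n : ℕ) : ℝ := ∑ m ∈ Finset.range (n+1), fS s m * Pdeg k n j m

lemma M_eq (k j s n : ℕ) : M k j s n = pref k n j * S k j s n := by
  unfold M S
  rw [Finset.mul_sum]
  exact Finset.sum_congr rfl fun m _ => by rw [Pdeg_eq]; ring

lemma S_rec (k j s n : ℕ) (hnj : j + 1 ≤ n) :
    ((k:ℝ)+1) * ((n:ℝ) - (j:ℝ)) * S k j s n
      = (((k:ℝ)+1)*(n:ℝ) - 2*(k:ℝ) + (k:ℝ)*((s:ℝ)+1)) * S k j s (n-1) := by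
  have hn1 : (n-1) + 1 = n := by omega
  unfold S
  rw [hn1, Finset.mul_sum]
  have step1 : ∀ m ∈ Finset.range (n+1),
      (((k:ℝ)+1) * ((n:ℝ) - (j:ℝ))) * (fS s m * Q k n j m)
        = fS s m * ((((k:ℝ)+1)*(n:ℝ) - 2*(k:ℝ) - (k:ℝ)*(m:ℝ)) * Q k (n-1) j m)
          + fS s m * ((k:ℝ) * (m:ℝ) * Q k (n-1) j (m-1)) := by
    intro m _
    have h := Q_rec k n j m hnj
    calc (((k:ℝ)+1) * ((n:ℝ) - (j:ℝ))) * (fS s m * Q k n j m)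
        = fS s m * (((k:ℝ)+1) * ((n:ℝ) - (j:ℝ)) * Q k n j m) := by ring
      _ = _ := by rw [h]; ring
  rw [Finset.sum_congr rfl step1, Finset.sum_add_distrib]
  have hsum2 : ∑ m ∈ Finset.range (n+1), fS s m * ((k:ℝ) * (m:ℝ) * Q k (n-1) j (m-1))
      = ∑ m ∈ Finset.range n, fS s m * (((k:ℝ)*((m:ℝ) + (s:ℝ) + 1)) * Q k (n-1) j m) := by
    rw [Finset.sum_range_succ' (fun m => fS s m * ((k:ℝ) * (m:ℝ) * Q k (n-1) j (m-1))) n]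
    simp only [Nat.cast_zero, mul_zero, zero_mul, add_zero, Nat.add_sub_cancel]
    refine Finset.sum_congr rfl fun m _ => ?_
    have h := fS_shift s m
    push_cast
    linear_combination ((k:ℝ) * Q k (n-1) j m) * h
  rw [hsum2, Finset.sum_range_succ, Q_eq_zero k (n-1) j n (by omega)]
  rw [mul_zero, mul_zero, add_zero, Finset.mul_sum, ← Finset.sum_add_distrib]
  exact Finset.sum_congr rfl fun m _ => by ring

lemma M_rec (k j s n : ℕ) (hnj : j + 1 ≤ n) :
    (((k:ℝ)+1)*(n:ℝ) - (k:ℝ)) * M k j s n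
      = (((k:ℝ)+1)*(n:ℝ) + (k:ℝ)*((s:ℝ)-1)) * M k j s (n-1) := by
  have hK : ((k:ℝ)+1) ≠ 0 := by positivity
  have h1 := pref_rec k n j hnj
  have h2 := S_rec k j s n hnj
  rw [M_eq, M_eq]
  have e1 : ((k:ℝ)+1)*(n:ℝ) - (k:ℝ) = ((k:ℝ)+1) * ((n:ℝ) - (k:ℝ)/((k:ℝ)+1)) := by
    field_simp
  calc (((k:ℝ)+1)*(n:ℝ) - (k:ℝ)) * (pref k n j * S k j s n)
      = ((k:ℝ)+1) * (pref k n j * ((n:ℝ) - (k:ℝ)/((k:ℝ)+1))) * S k j s n := by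
        rw [e1]; ring
    _ = ((k:ℝ)+1) * (pref k (n-1) j * ((n:ℝ) - (j:ℝ))) * S k j s n := by rw [h1]
    _ = pref k (n-1) j * (((k:ℝ)+1) * ((n:ℝ) - (j:ℝ)) * S k j s n) := by ring
    _ = pref k (n-1) j
        * ((((k:ℝ)+1)*(n:ℝ) - 2*(k:ℝ) + (k:ℝ)*((s:ℝ)+1)) * S k j s (n-1)) := by rw [h2]
    _ = _ := by ring

lemma Q_base (k j m : ℕ) : Q k j j m = if m = 0 then 1 else 0 := by
  unfold Q
  rw [Nat.sub_self]
  have hg : ∀ ℓ:ℕ, gbinom ((j:ℝ) - (k:ℝ)*(2+(ℓ:ℝ))/((k:ℝ)+1)) 0 = 1 := by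
    intro ℓ
    simp [gbinom]
  rcases m with _ | m
  · simp [gbinom]
  · rw [if_neg (Nat.succ_ne_zero m)]
    have h := Int.alternating_sum_range_choose_of_ne (show m+1 ≠ 0 by omega)
    have h' : ((∑ i ∈ Finset.range (m+2), (-1:ℤ)^i * ((m+1).choose i : ℤ) : ℤ):ℝ) = 0 := by
      exact_mod_cast congrArg (Int.cast (R := ℝ)) h
    push_cast at h'
    rw [← h']
    refine Finset.sum_congr rfl fun ℓ _ => ?_
    rw [hg ℓ]
    ring

lemma M_base (k j s : ℕ) : M k j s j = (s.factorial : ℝ) := by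
  unfold M
  have key : ∀ m ∈ Finset.range (j+1),
      fS s m * Pdeg k j j m = if m = 0 then (s.factorial:ℝ) else 0 := by
    intro m _
    rw [Pdeg_eq, pref_self, Q_base, one_mul]
    rcases m with _ | m
    · simp [fS_at_zero]
    · simp
  rw [Finset.sum_congr rfl key, Finset.sum_ite_eq' (Finset.range (j+1)) 0
    (fun _ => (s.factorial:ℝ))]
  simp

noncomputable def W (k j s n : ℕ) : ℝ :=
  ∏ i ∈ Finset.Ioc j n, ((((k:ℝ)+1)*(i:ℝ) + (k:ℝ)*((s:ℝ)-1)) / (((k:ℝ)+1)*(i:ℝ) - (k:ℝ)))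

lemma den_pos (k i : ℕ) (hi : 1 ≤ i) : (0:ℝ) < ((k:ℝ)+1)*(i:ℝ) - (k:ℝ) := by
  have h1 : (1:ℝ) ≤ (i:ℝ) := by exact_mod_cast hi
  have h2 : (0:ℝ) ≤ (k:ℝ) := Nat.cast_nonneg k
  nlinarith

lemma M_closed (k j s : ℕ) : ∀ n, j ≤ n → M k j s n = (s.factorial:ℝ) * W k j s n := by
  intro n hn
  induction n, hn using Nat.le_induction with
  | base =>
      rw [M_base]
      simp [W]
  | succ n hn ih =>
      have h := M_rec k j s (n+1) (by omega)
      simp only [Nat.add_sub_cancel] at h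
      rw [ih] at h
      have hden := den_pos k (n+1) (by omega)
      have hW : W k j s (n+1) = W k j s n
          * ((((k:ℝ)+1)*((n+1:ℕ):ℝ) + (k:ℝ)*((s:ℝ)-1))
              / (((k:ℝ)+1)*((n+1:ℕ):ℝ) - (k:ℝ))) := by
        unfold W
        rw [Finset.prod_Ioc_succ_top hn]
      rw [hW]
      apply mul_left_cancel₀ hden.ne'
      rw [h]
      have e2 : (s.factorial:ℝ) * (W k j s n
            * ((((k:ℝ)+1)*((n+1:ℕ):ℝ) + (k:ℝ)*((s:ℝ)-1))
              / (((k:ℝ)+1)*((n+1:ℕ):ℝ) - (k:ℝ))))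
          = ((((k:ℝ)+1)*((n+1:ℕ):ℝ) + (k:ℝ)*((s:ℝ)-1)) * ((s.factorial:ℝ) * W k j s n))
            / (((k:ℝ)+1)*((n+1:ℕ):ℝ) - (k:ℝ)) := by
        ring
      rw [e2, mul_comm (((k:ℝ)+1)*((n+1:ℕ):ℝ) - (k:ℝ)), div_mul_cancel₀ _ hden.ne']

end KT4

namespace KT5
open KT KT2 KT3 KT4

noncomputable def dcoef : ℕ → ℕ → ℝ
  | 0, 0 => 1
  | 0, _+1 => 0
  | s+1, 0 => -(dcoef s 0)
  | s+1, t+1 => dcoef s t - ((t:ℝ)+2) * dcoef s (t+1)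

lemma dcoef_zero (s : ℕ) : ∀ t, s < t → dcoef s t = 0 := by
  induction s with
  | zero =>
      intro t ht
      obtain ⟨t', rfl⟩ : ∃ t', t = t'+1 := ⟨t-1, by omega⟩
      rfl
  | succ s ih =>
      intro t ht
      obtain ⟨t', rfl⟩ : ∃ t', t = t'+1 := ⟨t-1, by omega⟩
      show dcoef s t' - ((t':ℝ)+2) * dcoef s (t'+1) = 0
      rw [ih t' (by omega), ih (t'+1) (by omega)]
      ring

lemma dcoef_diag (s : ℕ) : dcoef s s = 1 := by
  induction s with
  | zero => rfl
  | succ s ih =>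
      show dcoef s s - ((s:ℝ)+2) * dcoef s (s+1) = 1
      rw [ih, dcoef_zero s (s+1) (by omega)]
      ring

lemma pow_eq_sum_d (s : ℕ) :
    ∀ m : ℕ, (m:ℝ)^s = ∑ t ∈ Finset.range (s+1), dcoef s t * fS t m := by
  induction s with
  | zero =>
      intro m
      simp [dcoef, fS_zero_left]
  | succ s ih =>
      intro m
      have hm : (m:ℝ)^(s+1) = (m:ℝ) * (m:ℝ)^s := by ring
      rw [hm, ih m, Finset.mul_sum]
      have key : ∀ t ∈ Finset.range (s+1),
          (m:ℝ) * (dcoef s t * fS t m)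
            = dcoef s t * fS (t+1) m - (((t:ℝ)+1) * dcoef s t) * fS t m := by
        intro t _
        have h := fS_succ t m
        linear_combination (-(dcoef s t)) * h
      rw [Finset.sum_congr rfl key, Finset.sum_sub_distrib]
      rw [Finset.sum_range_succ' (fun t => dcoef (s+1) t * fS t m) (s+1)]
      have hsplit : ∀ t ∈ Finset.range (s+1), dcoef (s+1) (t+1) * fS (t+1) m
          = dcoef s t * fS (t+1) m - (((t:ℝ)+2) * dcoef s (t+1)) * fS (t+1) m := by
        intro t _
        show (dcoef s t - ((t:ℝ)+2) * dcoef s (t+1)) * fS (t+1) m = _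
        ring
      rw [Finset.sum_congr rfl hsplit, Finset.sum_sub_distrib]
      have hd0 : dcoef (s+1) 0 = -(dcoef s 0) := rfl
      rw [hd0, fS_zero_left]
      have haux : ∑ t ∈ Finset.range (s+1), (((t:ℝ)+1) * dcoef s t) * fS t m
          = ∑ t ∈ Finset.range (s+1), (((t:ℝ)+2) * dcoef s (t+1)) * fS (t+1) m
            + dcoef s 0 := by
        have h2 := Finset.sum_range_succ
          (fun t => (((t:ℝ)+1) * dcoef s t) * fS t m) (s+1)
        have h1 := Finset.sum_range_succ'
          (fun t => (((t:ℝ)+1) * dcoef s t) * fS t m) (s+1)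
        rw [h2, dcoef_zero s (s+1) (by omega), fS_zero_left] at h1
        push_cast at h1
        have hterm : ∀ t ∈ Finset.range (s+1),
            (((t:ℝ)+1)+1) * dcoef s (t+1) * fS (t+1) m
              = (((t:ℝ)+2) * dcoef s (t+1)) * fS (t+1) m := by
          intro t _
          ring
        rw [Finset.sum_congr rfl hterm] at h1
        linarith [h1]
      linarith [haux]

lemma Pdeg_eq_zero (k n j m : ℕ) (h : n - j < m) : Pdeg k n j m = 0 := by
  rw [Pdeg_eq, Q_eq_zero k n j m h, mul_zero]

lemma tsum_moment (k n j s : ℕ) :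
    (∑' m : ℕ, (m:ℝ)^s * Pdeg k n j m)
      = ∑ t ∈ Finset.range (s+1), dcoef s t * M k j t n := by
  have h1 : (∑' m : ℕ, (m:ℝ)^s * Pdeg k n j m)
      = ∑ m ∈ Finset.range (n+1), (m:ℝ)^s * Pdeg k n j m := by
    refine tsum_eq_sum ?_
    intro m hm
    rw [Finset.mem_range, not_lt] at hm
    rw [Pdeg_eq_zero k n j m (by omega), mul_zero]
  rw [h1]
  calc ∑ m ∈ Finset.range (n+1), (m:ℝ)^s * Pdeg k n j m
      = ∑ m ∈ Finset.range (n+1), ∑ t ∈ Finset.range (s+1),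
          dcoef s t * (fS t m * Pdeg k n j m) := by
        refine Finset.sum_congr rfl fun m _ => ?_
        rw [pow_eq_sum_d s m, Finset.sum_mul]
        exact Finset.sum_congr rfl fun t _ => by ring
    _ = ∑ t ∈ Finset.range (s+1), dcoef s t * M k j t n := by
        rw [Finset.sum_comm]
        refine Finset.sum_congr rfl fun t _ => ?_
        unfold M
        rw [Finset.mul_sum]

end KT5

namespace KT6
open KT KT2 KT3 KT4 KT5

lemma prod_ratio_eq (j n N : ℕ) (a b α : ℝ) (hN : n - (j+1) = N) (hn : j+2 ≤ n)
    (h1 : 1 ≤ N) (hza : 0 < (j:ℝ)+1+a) (hzb : 0 < (j:ℝ)+1+b) (hba : b + α = a) :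
    (∏ i ∈ Finset.Ioc j n, (((i:ℝ)+a)/((i:ℝ)+b))) / (n:ℝ)^α
      = (Real.GammaSeq ((j:ℝ)+1+b) N / Real.GammaSeq ((j:ℝ)+1+a) N)
        * ((N:ℝ)/(n:ℝ))^α := by
  have hprod : ∀ x:ℝ, 0 < (j:ℝ)+1+x → (0:ℝ) < ∏ i ∈ Finset.range (N+1), ((j:ℝ)+1+x+(i:ℝ)) := by
    intro x hx
    exact Finset.prod_pos fun i _ => add_pos_of_pos_of_nonneg hx (Nat.cast_nonneg i)
  have hIoc : ∀ x:ℝ, ∏ i ∈ Finset.Ioc j n, ((i:ℝ)+x)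
      = ∏ i ∈ Finset.range (N+1), ((j:ℝ)+1+x+(i:ℝ)) := by
    intro x
    rw [← Finset.Icc_add_one_left_eq_Ioc, ← Finset.Ico_add_one_right_eq_Icc, Finset.prod_Ico_eq_prod_range]
    have hc : n + 1 - (j+1) = N + 1 := by omega
    rw [hc]
    exact Finset.prod_congr rfl fun i _ => by push_cast; ring
  have hsplit : ∏ i ∈ Finset.Ioc j n, (((i:ℝ)+a)/((i:ℝ)+b))
      = (∏ i ∈ Finset.Ioc j n, ((i:ℝ)+a)) / (∏ i ∈ Finset.Ioc j n, ((i:ℝ)+b)) :=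
    Finset.prod_div_distrib _ _
  rw [hsplit, hIoc a, hIoc b]
  have hNR : (0:ℝ) < (N:ℝ) := by exact_mod_cast h1
  have hnR : (0:ℝ) < (n:ℝ) := by
    have : (1:ℕ) ≤ n := by omega
    exact_mod_cast Nat.lt_of_lt_of_le Nat.zero_lt_one this
  rw [Real.div_rpow hNR.le hnR.le]
  unfold Real.GammaSeq
  have hpow : (N:ℝ)^((j:ℝ)+1+b) * (N:ℝ)^α = (N:ℝ)^((j:ℝ)+1+a) := by
    rw [← Real.rpow_add hNR]
    congr 1
    linarith [hba]
  have hPa := hprod a hza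
  have hPb := hprod b hzb
  have hfa : (0:ℝ) < (N.factorial:ℝ) := by exact_mod_cast N.factorial_pos
  have hra : (0:ℝ) < (N:ℝ)^((j:ℝ)+1+a) := Real.rpow_pos_of_pos hNR _
  have hrb : (0:ℝ) < (N:ℝ)^((j:ℝ)+1+b) := Real.rpow_pos_of_pos hNR _
  have hrn : (0:ℝ) < (n:ℝ)^α := Real.rpow_pos_of_pos hnR _
  have hrN : (0:ℝ) < (N:ℝ)^α := Real.rpow_pos_of_pos hNR _
  field_simp [hPa.ne', hPb.ne', hfa.ne', hra.ne', hrb.ne', hrn.ne', hrN.ne']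
  linear_combination (-1:ℝ) * hpow

end KT6

namespace KT7
open KT KT2 KT3 KT4 KT5 KT6

lemma ha_gt (k t : ℕ) : -1 < (k:ℝ)*((t:ℝ)-1)/((k:ℝ)+1) := by
  have hK : (0:ℝ) < (k:ℝ)+1 := by positivity
  rw [lt_div_iff₀ hK]
  have h1 : (0:ℝ) ≤ (k:ℝ)*(t:ℝ) := by positivity
  nlinarith

lemma hb_gt (k : ℕ) : -1 < -((k:ℝ)/((k:ℝ)+1)) := by
  have hK : (0:ℝ) < (k:ℝ)+1 := by positivity
  have := (hc_range k).2
  linarith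

lemma hza_pos (k j t : ℕ) : 0 < (j:ℝ)+1+((k:ℝ)*((t:ℝ)-1)/((k:ℝ)+1)) := by
  have := ha_gt k t
  have : (0:ℝ) ≤ (j:ℝ) := Nat.cast_nonneg j
  linarith [ha_gt k t]

lemma hzb_pos (k j : ℕ) : 0 < (j:ℝ)+1+(-((k:ℝ)/((k:ℝ)+1))) := by
  have : (0:ℝ) ≤ (j:ℝ) := Nat.cast_nonneg j
  linarith [hb_gt k]

lemma W_term_eq (k j t n : ℕ) (hn : j + 2 ≤ n) :
    W k j t n / (n:ℝ)^(((k:ℝ)*(t:ℝ))/((k:ℝ)+1))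
      = (Real.GammaSeq ((j:ℝ)+1+(-((k:ℝ)/((k:ℝ)+1)))) (n-(j+1))
          / Real.GammaSeq ((j:ℝ)+1+((k:ℝ)*((t:ℝ)-1)/((k:ℝ)+1))) (n-(j+1)))
        * (((n-(j+1):ℕ):ℝ)/(n:ℝ))^(((k:ℝ)*(t:ℝ))/((k:ℝ)+1)) := by
  have hK : (0:ℝ) < (k:ℝ)+1 := by positivity
  have hW : W k j t n = ∏ i ∈ Finset.Ioc j n,
      (((i:ℝ)+((k:ℝ)*((t:ℝ)-1)/((k:ℝ)+1)))/((i:ℝ)+(-((k:ℝ)/((k:ℝ)+1))))) := by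
    unfold W
    refine Finset.prod_congr rfl fun i _ => ?_
    have e1 : ((k:ℝ)+1)*(i:ℝ) + (k:ℝ)*((t:ℝ)-1)
        = ((k:ℝ)+1)*((i:ℝ)+((k:ℝ)*((t:ℝ)-1)/((k:ℝ)+1))) := by
      field_simp
    have e2 : ((k:ℝ)+1)*(i:ℝ) - (k:ℝ)
        = ((k:ℝ)+1)*((i:ℝ)+(-((k:ℝ)/((k:ℝ)+1)))) := by
      field_simp
      ring
    rw [e1, e2, mul_div_mul_left _ _ (ne_of_gt hK)]
  rw [hW]
  refine prod_ratio_eq j n (n-(j+1)) _ _ _ rfl hn (by omega) (hza_pos k j t) (hzb_pos k j) ?_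
  field_simp
  ring

lemma W_limit (k j t : ℕ) :
    Filter.Tendsto (fun n : ℕ => W k j t n / (n:ℝ)^(((k:ℝ)*(t:ℝ))/((k:ℝ)+1)))
      Filter.atTop
      (nhds (Real.Gamma ((j:ℝ)+1+(-((k:ℝ)/((k:ℝ)+1))))
          / Real.Gamma ((j:ℝ)+1+((k:ℝ)*((t:ℝ)-1)/((k:ℝ)+1))))) := by
  have hsub : Filter.Tendsto (fun n:ℕ => n - (j+1)) Filter.atTop Filter.atTop :=
    Filter.tendsto_sub_atTop_nat (j+1)
  have hGb := (Real.GammaSeq_tendsto_Gamma ((j:ℝ)+1+(-((k:ℝ)/((k:ℝ)+1))))).comp hsub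
  have hGa := (Real.GammaSeq_tendsto_Gamma ((j:ℝ)+1+((k:ℝ)*((t:ℝ)-1)/((k:ℝ)+1)))).comp hsub
  have hGaNe : Real.Gamma ((j:ℝ)+1+((k:ℝ)*((t:ℝ)-1)/((k:ℝ)+1))) ≠ 0 :=
    (Real.Gamma_pos_of_pos (hza_pos k j t)).ne'
  have hdiv := hGb.div hGa hGaNe
  have hfrac : Filter.Tendsto (fun n:ℕ => ((n-(j+1):ℕ):ℝ)/(n:ℝ)) Filter.atTop (nhds 1) := by
    have hbase : Filter.Tendsto (fun n:ℕ => 1 - ((j:ℝ)+1)/(n:ℝ)) Filter.atTop (nhds 1) := by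
      have h0 := tendsto_const_div_atTop_nhds_zero_nat ((j:ℝ)+1)
      have h2 := (tendsto_const_nhds (x := (1:ℝ)) (f := Filter.atTop (α := ℕ))).sub h0
      simpa using h2
    refine hbase.congr' ?_
    filter_upwards [Filter.eventually_ge_atTop (j+1)] with n hn
    have hn0 : (0:ℝ) < (n:ℝ) := by
      have : (1:ℕ) ≤ n := by omega
      exact_mod_cast Nat.lt_of_lt_of_le Nat.zero_lt_one this
    rw [Nat.cast_sub hn]
    push_cast
    field_simp
  have hrpow : Filter.Tendsto
      (fun n:ℕ => (((n-(j+1):ℕ):ℝ)/(n:ℝ))^(((k:ℝ)*(t:ℝ))/((k:ℝ)+1)))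
      Filter.atTop (nhds 1) := by
    have hc := (Real.continuousAt_rpow_const 1 (((k:ℝ)*(t:ℝ))/((k:ℝ)+1))
      (Or.inl one_ne_zero)).tendsto
    have := hc.comp hfrac
    simpa [Real.one_rpow, Function.comp_def] using this
  have htot := hdiv.mul hrpow
  rw [mul_one] at htot
  refine htot.congr' ?_
  filter_upwards [Filter.eventually_ge_atTop (j+2)] with n hn
  exact (W_term_eq k j t n hn).symm

end KT7

open KT KT2 KT3 KT4 KT5 KT6 KT7

/-- For fixed `j ≥ 1`, the `s`-th moment of `Y_{n,j}` satisfies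
`E(Y_{n,j}^s)/n^{ks/(k+1)} → s! Γ(j+1/(k+1))/Γ(j+1+k(s-1)/(k+1))`. -/
theorem ktree_outdegree_moments (k j : ℕ) (hk : 1 ≤ k) (hj : 1 ≤ j) (s : ℕ) :
    Tendsto (fun n : ℕ =>
        (∑' m : ℕ, (m : ℝ) ^ s * Pdeg k n j m) / (n : ℝ) ^ (((k : ℝ) * s) / ((k : ℝ) + 1)))
      atTop
      (nhds ((Nat.factorial s : ℝ) * Real.Gamma ((j : ℝ) + 1 / ((k : ℝ) + 1))
        / Real.Gamma ((j : ℝ) + 1 + (k : ℝ) * ((s : ℝ) - 1) / ((k : ℝ) + 1)))) := by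
  classical
  have hK : (0:ℝ) < (k:ℝ)+1 := by positivity
  set α : ℕ → ℝ := fun t => ((k:ℝ)*(t:ℝ))/((k:ℝ)+1) with hα
  set G : ℕ → ℝ := fun t => Real.Gamma ((j:ℝ)+1+(-((k:ℝ)/((k:ℝ)+1))))
      / Real.Gamma ((j:ℝ)+1+((k:ℝ)*((t:ℝ)-1)/((k:ℝ)+1))) with hG
  set L : ℕ → ℝ := fun t => if t = s then (s.factorial : ℝ) * G s else 0 with hL
  have key : ∀ t ∈ Finset.range (s+1),
      Tendsto (fun n : ℕ => dcoef s t * M k j t n / (n:ℝ) ^ (α s)) atTop (nhds (L t)) := by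
    intro t ht
    rw [Finset.mem_range] at ht
    rcases eq_or_lt_of_le (Nat.lt_succ_iff.mp ht) with heq | hlt
    · -- t = s
      subst heq
      have hlim := (W_limit k j t).const_mul ((t.factorial : ℝ))
      rw [hL]
      simp only [if_pos rfl]
      refine hlim.congr' ?_
      filter_upwards [Filter.eventually_ge_atTop j] with n hn
      rw [M_closed k j t n hn, dcoef_diag, one_mul]
      ring
    · -- t < s
      have hpos : (0:ℝ) < α s - α t := by
        rw [hα]
        simp only
        rw [div_sub_div_same, lt_div_iff₀ hK]
        have h1 : (1:ℝ) ≤ (k:ℝ) := by exact_mod_cast hk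
        have h2 : (t:ℝ) + 1 ≤ (s:ℝ) := by exact_mod_cast hlt
        nlinarith
      have hexp : Tendsto (fun n : ℕ => (n:ℝ) ^ (α t - α s)) atTop (nhds 0) := by
        have h0 := (tendsto_rpow_neg_atTop hpos).comp tendsto_natCast_atTop_atTop
        have he : ∀ n : ℕ, (n:ℝ) ^ (-(α s - α t)) = (n:ℝ) ^ (α t - α s) := by
          intro n; congr 1; ring
        exact h0.congr fun n => he n
      have hlim := ((W_limit k j t).mul hexp).const_mul (dcoef s t * (t.factorial : ℝ))
      rw [mul_zero, mul_zero] at hlim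
      rw [hL]
      simp only [if_neg (by omega : ¬ t = s)]
      refine hlim.congr' ?_
      filter_upwards [Filter.eventually_ge_atTop (max j 1)] with n hn
      have hnj : j ≤ n := le_trans (le_max_left _ _) hn
      have hn0 : (0:ℝ) < (n:ℝ) := by
        have : (1:ℕ) ≤ n := le_trans (le_max_right _ _) hn
        exact_mod_cast Nat.lt_of_lt_of_le Nat.zero_lt_one this
      rw [M_closed k j t n hnj, Real.rpow_sub hn0]
      have hat : (0:ℝ) < (n:ℝ) ^ (α t) := Real.rpow_pos_of_pos hn0 _
      have has : (0:ℝ) < (n:ℝ) ^ (α s) := Real.rpow_pos_of_pos hn0 _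
      field_simp
      ring
  have hsum := tendsto_finset_sum (Finset.range (s+1)) key
  have hLsum : ∑ t ∈ Finset.range (s+1), L t = (s.factorial : ℝ) * G s := by
    rw [hL]
    rw [Finset.sum_ite_eq' (Finset.range (s+1)) s (fun _ => (s.factorial : ℝ) * G s)]
    rw [if_pos (by rw [Finset.mem_range]; omega)]
  rw [hLsum] at hsum
  have hfinal : (s.factorial : ℝ) * G s
      = (Nat.factorial s : ℝ) * Real.Gamma ((j : ℝ) + 1 / ((k : ℝ) + 1))
        / Real.Gamma ((j : ℝ) + 1 + (k : ℝ) * ((s : ℝ) - 1) / ((k : ℝ) + 1)) := by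
    rw [hG]
    have harg : (j:ℝ)+1+(-((k:ℝ)/((k:ℝ)+1))) = (j : ℝ) + 1 / ((k : ℝ) + 1) := by
      field_simp
      ring
    rw [harg]
    ring
  rw [hfinal] at hsum
  refine hsum.congr' ?_
  filter_upwards [Filter.eventually_ge_atTop 0] with n _
  rw [KT5.tsum_moment k n j s, Finset.sum_div]
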